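/- Let (M,d) be a complete separable metric space, let μ, ν be Borel probability measures on M, and let c : M × M → [0,∞) be lower semicontinuous. Then there exists a coupling π* of μ and ν such that ∫ c dπ* = inf { ∫ c dπ : π a coupling of μ and ν }. In other words, the Kantorovich transportation problem admits a minimizer. -/

import Mathlib

open MeasureTheory Set Filter Topology TopologicalSpace
open scoped ENNReal


lemma exists_good_family (X : Type*) [TopologicalSpace X] [SecondCountableTopology X] :
    ∃ S : Set (Set X), S.Countable ∧ (∀ U ∈ S, IsOpen U) ∧ univ ∈ S ∧
      (∀ U ∈ S, ∀ V ∈ S, U ∪ V ∈ S) ∧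
      (∀ K G : Set X, IsCompact K → IsOpen G → K ⊆ G → ∃ U ∈ S, K ⊆ U ∧ U ⊆ G) := by
  classical
  set B : Set (Set X) := insert univ (countableBasis X) with hB
  have hBc : B.Countable := (countable_countableBasis X).insert _
  have hBo : ∀ b ∈ B, IsOpen b := by
    rintro b (rfl | hb)
    · exact isOpen_univ
    · exact isOpen_of_mem_countableBasis hb
  refine ⟨sUnion '' {t | t.Finite ∧ t ⊆ B}, ?_, ?_, ?_, ?_, ?_⟩
  · exact (countable_setOf_finite_subset hBc).image _
  · rintro U ⟨t, ⟨htf, htB⟩, rfl⟩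
    exact isOpen_sUnion fun s hs => hBo s (htB hs)
  · exact ⟨{univ}, ⟨finite_singleton _, by simp [hB]⟩, by simp⟩
  · rintro U ⟨t, ⟨htf, htB⟩, rfl⟩ V ⟨u, ⟨huf, huB⟩, rfl⟩
    exact ⟨t ∪ u, ⟨htf.union huf, union_subset htB huB⟩, by rw [sUnion_union]⟩
  · intro K G hK hG hKG
    have hbasis := isBasis_countableBasis X
    have : ∀ x : X, x ∈ K → ∃ b : Set X, b ∈ countableBasis X ∧ x ∈ b ∧ b ⊆ G := by
      intro x hx
      obtain ⟨b, hb, hxb, hbG⟩ := hbasis.exists_subset_of_mem_open (hKG hx) hG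
      exact ⟨b, hb, hxb, hbG⟩
    choose! b hb hxb hbG using this
    have hnhds : ∀ x ∈ K, b x ∈ 𝓝 x := fun x hx =>
      (isOpen_of_mem_countableBasis (hb x hx)).mem_nhds (hxb x hx)
    obtain ⟨t, htK, hcov⟩ := hK.elim_nhds_subcover b hnhds
    refine ⟨⋃₀ ((Finset.image b t : Finset (Set X)) : Set (Set X)),
      ⟨((Finset.image b t : Finset (Set X)) : Set (Set X)),
        ⟨(Finset.image b t : Finset (Set X)).finite_toSet, ?_⟩, rfl⟩, ?_, ?_⟩
    · intro s hs
      simp only [Finset.coe_image, mem_image, Finset.mem_coe] at hs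
      obtain ⟨x, hxt, rfl⟩ := hs
      exact Or.inr (hb x (htK x hxt))
    · intro x hx
      obtain ⟨y, hyt, hxy⟩ := mem_iUnion₂.1 (hcov hx)
      exact ⟨b y, by simp only [Finset.coe_image, mem_image]; exact ⟨y, hyt, rfl⟩, hxy⟩
    · intro x hx
      obtain ⟨s, hs, hxs⟩ := hx
      simp only [Finset.coe_image, mem_image, Finset.mem_coe] at hs
      obtain ⟨y, hyt, rfl⟩ := hs
      exact hbG y (htK y hyt) hxs


lemma tight_of_prob_aux {X : Type*} [MetricSpace X] [CompleteSpace X] [SeparableSpace X]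
    [MeasurableSpace X] [OpensMeasurableSpace X]
    (μ : Measure X) [IsProbabilityMeasure μ] {ε : ℝ≥0∞} (hε : 0 < ε) (hε1 : ε ≤ 1) :
    ∃ K : Set X, IsCompact K ∧ μ Kᶜ ≤ ε := by
  classical
  rcases isEmpty_or_nonempty X with hX | hX
  · exfalso
    have h1 : μ univ = 1 := measure_univ
    rw [eq_empty_of_isEmpty (univ : Set X)] at h1
    simp at h1
  obtain ⟨u, hu⟩ := TopologicalSpace.exists_dense_seq X
  have key : ∀ k : ℕ, ∃ N : ℕ,
      μ (⋃ i ∈ Finset.range N, Metric.closedBall (u i) ((k+1:ℝ)⁻¹))ᶜ ≤ ε / 2 ^ (k + 1) := by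
    intro k
    set s : ℕ → Set X := fun N => ⋃ i ∈ Finset.range N, Metric.closedBall (u i) ((k+1:ℝ)⁻¹)
      with hs
    have smono : Monotone s := by
      intro a b hab
      apply biUnion_subset_biUnion_left
      intro i hi
      exact Finset.mem_range.2 (lt_of_lt_of_le (Finset.mem_range.1 hi) hab)
    have hsU : (⋃ N, s N) = univ := by
      apply eq_univ_of_forall
      intro x
      have hr : (0:ℝ) < (k+1:ℝ)⁻¹ := by positivity
      obtain ⟨i, hi⟩ := hu.exists_dist_lt x hr
      exact mem_iUnion.2 ⟨i+1, mem_iUnion₂.2 ⟨i, Finset.mem_range.2 (Nat.lt_succ_self i),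
        by simpa [Metric.mem_closedBall, dist_comm] using hi.le⟩⟩
    have htend : Tendsto (fun N => μ (s N)) atTop (𝓝 (μ (⋃ N, s N))) :=
      tendsto_measure_iUnion_atTop smono
    rw [hsU, measure_univ] at htend
    have hδ1 : ε / 2 ^ (k+1) ≤ 1 := by
      refine le_trans ?_ hε1
      exact ENNReal.div_le_of_le_mul (le_mul_of_one_le_right' (one_le_pow₀ one_le_two))
    have hpos : (0:ℝ≥0∞) < ε / 2 ^ (k + 1) :=
      ENNReal.div_pos hε.ne' (by simp [ENNReal.pow_ne_top])
    have hlt : (1:ℝ≥0∞) - ε / 2 ^ (k+1) < 1 :=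
      ENNReal.sub_lt_self ENNReal.one_ne_top one_ne_zero hpos.ne'
    have hev : ∀ᶠ N in atTop, (1:ℝ≥0∞) - ε / 2 ^ (k+1) < μ (s N) :=
      htend.eventually_const_lt hlt
    obtain ⟨N, hN⟩ := hev.exists
    refine ⟨N, ?_⟩
    have hmeas : MeasurableSet (s N) := by
      apply MeasurableSet.biUnion (Finset.range N).countable_toSet
      intro i _
      exact Metric.isClosed_closedBall.measurableSet
    rw [prob_compl_eq_one_sub hmeas, tsub_le_iff_right]
    calc (1:ℝ≥0∞) = (1 - ε / 2 ^ (k+1)) + ε / 2 ^ (k+1) := (tsub_add_cancel_of_le hδ1).symm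
      _ ≤ μ (s N) + ε / 2 ^ (k+1) := add_le_add_left hN.le _
      _ ≤ ε / 2 ^ (k+1) + μ (s N) := by rw [add_comm]
  choose N hN using key
  set K : Set X := ⋂ k, ⋃ i ∈ Finset.range (N k), Metric.closedBall (u i) ((k+1:ℝ)⁻¹) with hK
  have hKclosed : IsClosed K := by
    apply isClosed_iInter
    intro k
    exact isClosed_biUnion_finset fun i _ => Metric.isClosed_closedBall
  refine ⟨K, ?_, ?_⟩
  · rw [isCompact_iff_totallyBounded_isComplete]
    refine ⟨?_, hKclosed.isComplete⟩
    rw [Metric.totallyBounded_iff]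
    intro δ hδ
    obtain ⟨k, hk⟩ := exists_nat_gt δ⁻¹
    have hkδ : ((k:ℝ)+1)⁻¹ < δ := by
      rw [inv_lt_comm₀ (by positivity) hδ]
      exact hk.trans (lt_add_one _)
    refine ⟨u '' (Finset.range (N k) : Set ℕ), ((Finset.range (N k)).finite_toSet.image u), ?_⟩
    intro x hx
    have hxk : x ∈ ⋃ i ∈ Finset.range (N k), Metric.closedBall (u i) ((k+1:ℝ)⁻¹) :=
      mem_iInter.1 hx k
    obtain ⟨i, hi, hxi⟩ := mem_iUnion₂.1 hxk
    refine mem_iUnion₂.2 ⟨u i, ⟨i, hi, rfl⟩, ?_⟩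
    exact Metric.mem_ball.2 (lt_of_le_of_lt (Metric.mem_closedBall.1 hxi) hkδ)
  · have hsub : Kᶜ ⊆ ⋃ k, (⋃ i ∈ Finset.range (N k), Metric.closedBall (u i) ((k+1:ℝ)⁻¹))ᶜ := by
      rw [hK, compl_iInter]
    calc μ Kᶜ ≤ ∑' k, μ (⋃ i ∈ Finset.range (N k), Metric.closedBall (u i) ((k+1:ℝ)⁻¹))ᶜ :=
          (measure_mono hsub).trans (measure_iUnion_le _)
      _ ≤ ∑' k, ε / 2 ^ (k+1) := ENNReal.tsum_le_tsum hN
      _ = ε := by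
          have : ∀ k : ℕ, ε / 2 ^ (k+1) = ε * (2⁻¹ : ℝ≥0∞) ^ (k+1) := by
            intro k
            rw [div_eq_mul_inv, ENNReal.inv_pow]
          simp_rw [this]
          rw [ENNReal.tsum_mul_left, ENNReal.tsum_geometric_add_one,
            ENNReal.one_sub_inv_two, inv_inv]
          calc ε * (2⁻¹ * 2) = ε * 1 := by rw [ENNReal.inv_mul_cancel (by simp) (by simp)]
            _ = ε := mul_one ε

lemma tight_of_prob {X : Type*} [MetricSpace X] [CompleteSpace X] [SeparableSpace X]
    [MeasurableSpace X] [OpensMeasurableSpace X]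
    (μ : Measure X) [IsProbabilityMeasure μ] {ε : ℝ≥0∞} (hε : 0 < ε) :
    ∃ K : Set X, IsCompact K ∧ μ Kᶜ ≤ ε := by
  obtain ⟨K, hK, hKμ⟩ := tight_of_prob_aux μ (ε := min ε 1) (lt_min hε zero_lt_one)
    (min_le_right _ _)
  exact ⟨K, hK, hKμ.trans (min_le_left _ _)⟩

lemma exists_limit_measure {X : Type*} [MetricSpace X] [SecondCountableTopology X]
    [MeasurableSpace X] [BorelSpace X]
    (π : ℕ → Measure X) (hπ : ∀ n, IsProbabilityMeasure (π n))
    (tight : ∀ ε : ℝ≥0∞, 0 < ε → ∃ K : Set X, IsCompact K ∧ ∀ n, π n Kᶜ ≤ ε) :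
    ∃ (π' : Measure X) (φ : ℕ → ℕ), StrictMono φ ∧ IsProbabilityMeasure π' ∧
      ∀ G : Set X, IsOpen G → π' G ≤ liminf (fun n => π (φ n) G) atTop := by
  classical
  obtain ⟨S, hScount, hSopen, hSuniv, hSunion, hSapprox⟩ := exists_good_family X
  haveI : Countable ↥S := hScount.to_subtype
  -- a subsequence along which the measures of all sets in `S` converge
  set F : ℕ → (↥S → ℝ) := fun n U => (π n (U : Set X)).toReal with hF
  have hFC : ∀ n, F n ∈ univ.pi (fun _ : ↥S => Icc (0:ℝ) 1) := by
    intro n U _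
    haveI := hπ n
    exact ⟨ENNReal.toReal_nonneg, by
      rw [← ENNReal.toReal_one]
      exact ENNReal.toReal_mono ENNReal.one_ne_top prob_le_one⟩
  have hC : IsCompact (univ.pi (fun _ : ↥S => Icc (0:ℝ) 1)) :=
    isCompact_univ_pi (fun _ => isCompact_Icc)
  obtain ⟨g, hgC, φ, hφ, hconv⟩ := hC.tendsto_subseq hFC
  have hgpt : ∀ U : ↥S, Tendsto (fun n => F (φ n) U) atTop (𝓝 (g U)) := by
    intro U
    exact (tendsto_pi_nhds.1 hconv) U
  set L : ↥S → ℝ≥0∞ := fun U => ENNReal.ofReal (g U) with hLdef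
  have hL : ∀ U : ↥S, Tendsto (fun n => π (φ n) (U : Set X)) atTop (𝓝 (L U)) := by
    intro U
    have h2 := (ENNReal.continuous_ofReal.tendsto _).comp (hgpt U)
    have : (fun n => ENNReal.ofReal (F (φ n) U)) = fun n => π (φ n) (U : Set X) := by
      funext n
      haveI := hπ (φ n)
      exact ENNReal.ofReal_toReal (measure_ne_top _ _)
    rwa [show (ENNReal.ofReal ∘ fun n => F (φ n) U) = fun n => ENNReal.ofReal (F (φ n) U) from rfl,
      this] at h2
  have hL1 : ∀ U : ↥S, L U ≤ 1 := fun U =>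
    le_of_tendsto' (hL U) (fun n => haveI := hπ (φ n); prob_le_one)
  have hLuniv : L ⟨univ, hSuniv⟩ = 1 := by
    refine tendsto_nhds_unique (hL _) ?_
    have : (fun n => π (φ n) ((⟨univ, hSuniv⟩ : ↥S) : Set X)) = fun _ => (1:ℝ≥0∞) := by
      funext n; haveI := hπ (φ n); exact measure_univ
    rw [this]; exact tendsto_const_nhds
  have hLmono : ∀ U V : ↥S, (U : Set X) ⊆ V → L U ≤ L V := fun U V h =>
    le_of_tendsto_of_tendsto' (hL U) (hL V) (fun n => measure_mono h)
  -- the content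
  haveI hne : ∀ A : Set X, Nonempty {U : ↥S // A ⊆ (U : Set X)} :=
    fun A => ⟨⟨⟨univ, hSuniv⟩, subset_univ A⟩⟩
  set lam : Set X → ℝ≥0∞ := fun A => ⨅ U : {U : ↥S // A ⊆ (U : Set X)}, L U.1 with hlamdef
  have hlam_le_L : ∀ (A : Set X) (U : ↥S), A ⊆ (U : Set X) → lam A ≤ L U := fun A U h =>
    iInf_le (fun W : {U : ↥S // A ⊆ (U : Set X)} => L W.1) ⟨U, h⟩
  have hlam1 : ∀ A : Set X, lam A ≤ 1 := fun A =>
    (hlam_le_L A ⟨univ, hSuniv⟩ (subset_univ A)).trans hLuniv.le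
  have hlam_ne_top : ∀ A : Set X, lam A ≠ ⊤ := fun A =>
    ((hlam1 A).trans_lt ENNReal.one_lt_top).ne
  have hlam_mono : ∀ A B : Set X, A ⊆ B → lam A ≤ lam B := fun A B hAB =>
    le_iInf fun W => hlam_le_L A W.1 (hAB.trans W.2)
  have hsubadd : ∀ A B : Set X, lam (A ∪ B) ≤ lam A + lam B := by
    intro A B
    rw [hlamdef]
    simp only
    rw [ENNReal.iInf_add]
    refine le_iInf fun U => ?_
    rw [ENNReal.add_iInf]
    refine le_iInf fun V => ?_
    have hmem : (U.1 : Set X) ∪ V.1 ∈ S := hSunion _ U.1.2 _ V.1.2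
    calc lam (A ∪ B) ≤ L ⟨_, hmem⟩ := hlam_le_L _ _ (union_subset_union U.2 V.2)
      _ ≤ L U.1 + L V.1 := by
          refine le_of_tendsto_of_tendsto' (hL _) ((hL U.1).add (hL V.1)) (fun n => ?_)
          exact measure_union_le _ _
  have hadd : ∀ A B : Set X, IsCompact A → IsCompact B → Disjoint A B →
      lam A + lam B ≤ lam (A ∪ B) := by
    intro A B hA hB hAB
    refine le_iInf fun W => ?_
    obtain ⟨V₁, V₂, hV₁, hV₂, hAV₁, hBV₂, hV₁₂⟩ :=
      SeparatedNhds.of_isCompact_isCompact hA hB hAB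
    obtain ⟨U₁, hU₁S, hAU₁, hU₁sub⟩ := hSapprox A ((W.1 : Set X) ∩ V₁) hA
      ((hSopen _ W.1.2).inter hV₁)
      (subset_inter (subset_union_left.trans W.2) hAV₁)
    obtain ⟨U₂, hU₂S, hBU₂, hU₂sub⟩ := hSapprox B ((W.1 : Set X) ∩ V₂) hB
      ((hSopen _ W.1.2).inter hV₂)
      (subset_inter (subset_union_right.trans W.2) hBV₂)
    have hdisj : Disjoint U₁ U₂ :=
      hV₁₂.mono (hU₁sub.trans inter_subset_right) (hU₂sub.trans inter_subset_right)
    have hmem : U₁ ∪ U₂ ∈ S := hSunion _ hU₁S _ hU₂S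
    calc lam A + lam B ≤ L ⟨U₁, hU₁S⟩ + L ⟨U₂, hU₂S⟩ :=
          add_le_add (hlam_le_L _ _ hAU₁) (hlam_le_L _ _ hBU₂)
      _ = L ⟨U₁ ∪ U₂, hmem⟩ := by
          refine tendsto_nhds_unique (((hL _).add (hL _)).congr (fun n => ?_)) (hL _)
          exact (measure_union hdisj (hSopen _ hU₂S).measurableSet).symm
      _ ≤ L W.1 := hLmono _ _
          (union_subset (hU₁sub.trans inter_subset_left) (hU₂sub.trans inter_subset_left))
  set μC : Content X :=
    { toFun := fun K => (lam K).toNNReal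
      mono' := fun K₁ K₂ h =>
        (ENNReal.toNNReal_le_toNNReal (hlam_ne_top _) (hlam_ne_top _)).2 (hlam_mono _ _ h)
      sup_disjoint' := by
        intro K₁ K₂ hd _ _
        have h1 : lam ((K₁ ⊔ K₂ : TopologicalSpace.Compacts X) : Set X) = lam K₁ + lam K₂ := by
          rw [TopologicalSpace.Compacts.coe_sup]
          exact le_antisymm (hsubadd _ _) (hadd _ _ K₁.2 K₂.2 hd)
        rw [← ENNReal.toNNReal_add (hlam_ne_top _) (hlam_ne_top _), ← h1]
      sup_le' := by
        intro K₁ K₂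
        rw [← ENNReal.toNNReal_add (hlam_ne_top _) (hlam_ne_top _)]
        refine (ENNReal.toNNReal_le_toNNReal (hlam_ne_top _) ?_).2 ?_
        · exact ENNReal.add_ne_top.2 ⟨hlam_ne_top _, hlam_ne_top _⟩
        · rw [TopologicalSpace.Compacts.coe_sup]
          exact hsubadd _ _ } with hμC
  have hμCK : ∀ K : TopologicalSpace.Compacts X, (μC K : ℝ≥0∞) = lam K := by
    intro K
    exact ENNReal.coe_toNNReal (hlam_ne_top _)
  set π' := μC.measure with hπ'
  have hopen : ∀ G : Set X, IsOpen G →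
      π' G = ⨆ (K : TopologicalSpace.Compacts X) (_ : (K : Set X) ⊆ G), lam K := by
    intro G hG
    rw [hπ', Content.measure_apply _ hG.measurableSet,
      Content.outerMeasure_of_isOpen _ _ hG]
    simp only [Content.innerContent]
    congr 1
    funext K
    congr 1
    funext hK
    exact hμCK K
  have hliminf : ∀ G : Set X, IsOpen G → π' G ≤ liminf (fun n => π (φ n) G) atTop := by
    intro G hG
    rw [hopen G hG]
    refine iSup₂_le fun K hKG => ?_
    obtain ⟨U, hUS, hKU, hUG⟩ := hSapprox K G K.2 hG hKG
    refine (hlam_le_L _ ⟨U, hUS⟩ hKU).trans ?_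
    have := (hL ⟨U, hUS⟩).liminf_eq
    rw [← this]
    exact liminf_le_liminf (Eventually.of_forall fun n => measure_mono hUG)
  have huniv : π' univ = 1 := by
    rw [hopen univ isOpen_univ]
    refine le_antisymm (iSup₂_le fun K _ => hlam1 _) ?_
    refine ENNReal.le_of_forall_pos_le_add fun ε hε hlt => ?_
    obtain ⟨K, hK, hKε⟩ := tight ε (by exact_mod_cast hε)
    have hlamK : (1:ℝ≥0∞) - ε ≤ lam K := by
      refine le_iInf fun W => ?_
      refine ge_of_tendsto' (hL W.1) fun n => ?_
      rw [tsub_le_iff_right]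
      haveI := hπ (φ n)
      calc (1:ℝ≥0∞) = π (φ n) univ := measure_univ.symm
        _ ≤ π (φ n) (K ∪ Kᶜ) := by rw [union_compl_self]
        _ ≤ π (φ n) K + π (φ n) Kᶜ := measure_union_le _ _
        _ ≤ π (φ n) (W.1 : Set X) + ε := add_le_add (measure_mono W.2) (hKε (φ n))
    have : (1:ℝ≥0∞) - ε ≤ ⨆ (K : TopologicalSpace.Compacts X) (_ : (K : Set X) ⊆ univ), lam K :=
      hlamK.trans (le_iSup₂ (f := fun (K : TopologicalSpace.Compacts X)
        (_ : (K : Set X) ⊆ univ) => lam (K : Set X)) ⟨K, hK⟩ (subset_univ _))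
    rw [tsub_le_iff_right] at this
    rwa [add_comm] at this ⊢
  exact ⟨π', φ, hφ, ⟨huniv⟩, hliminf⟩


lemma measure_eq_of_le_open {Y : Type*} [MetricSpace Y] [MeasurableSpace Y] [BorelSpace Y]
    (ρ μ : Measure Y) [IsProbabilityMeasure ρ] [IsProbabilityMeasure μ]
    (h : ∀ G : Set Y, IsOpen G → ρ G ≤ μ G) : ρ = μ := by
  have hclosed : ∀ F : Set Y, IsClosed F → ρ F ≤ μ F := by
    intro F hF
    have htend : Tendsto (fun r => μ (Metric.thickening r F)) (𝓝[>] 0) (𝓝 (μ F)) :=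
      tendsto_measure_thickening_of_isClosed ⟨1, one_pos, measure_ne_top μ _⟩ hF
    have hev : ∀ᶠ r in (𝓝[>] (0:ℝ)), ρ F ≤ μ (Metric.thickening r F) := by
      filter_upwards [self_mem_nhdsWithin] with r hr
      calc ρ F ≤ ρ (Metric.thickening r F) := measure_mono (Metric.self_subset_thickening hr _)
        _ ≤ μ (Metric.thickening r F) := h _ Metric.isOpen_thickening
    exact ge_of_tendsto htend hev
  have hopen : ∀ G : Set Y, IsOpen G → ρ G = μ G := by
    intro G hG
    refine le_antisymm (h G hG) ?_
    have h1 : ρ Gᶜ ≤ μ Gᶜ := hclosed _ hG.isClosed_compl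
    calc μ G = 1 - μ Gᶜ := by
          rw [prob_compl_eq_one_sub hG.measurableSet]
          rw [ENNReal.sub_sub_cancel ENNReal.one_ne_top prob_le_one]
      _ ≤ 1 - ρ Gᶜ := tsub_le_tsub_left h1 1
      _ = ρ G := by
          rw [prob_compl_eq_one_sub hG.measurableSet]
          rw [ENNReal.sub_sub_cancel ENNReal.one_ne_top prob_le_one]
  refine ext_of_generate_finite {s : Set Y | IsOpen s} ?_ ?_ ?_ ?_
  · rw [BorelSpace.measurable_eq (α := Y)]
    rfl
  · exact fun s hs t ht _ => hs.inter ht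
  · exact fun s hs => hopen s hs
  · rw [hopen univ isOpen_univ]


/-- `IsCoupling π μ ν` means `π` is a probability measure on `M × M`
with first marginal `μ` and second marginal `ν`. -/
def IsCoupling {M : Type*} [MeasurableSpace M] (π : Measure (M × M))
    (μ ν : Measure M) : Prop :=
  IsProbabilityMeasure π ∧ π.map Prod.fst = μ ∧ π.map Prod.snd = ν

/-- Kantorovich minimizer exists for a lower semicontinuous nonnegative cost. -/
theorem kantorovich_minimizer_exists
    {M : Type*} [MetricSpace M] [CompleteSpace M] [TopologicalSpace.SeparableSpace M]
    [MeasurableSpace M] [BorelSpace M]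
    (μ ν : Measure M) [IsProbabilityMeasure μ] [IsProbabilityMeasure ν]
    (c : M × M → ℝ) (hc0 : ∀ p, 0 ≤ c p) (hc : LowerSemicontinuous c) :
    ∃ πs : Measure (M × M), IsCoupling πs μ ν ∧
      (∫⁻ p, ENNReal.ofReal (c p) ∂πs) =
        ⨅ (π : Measure (M × M)) (_ : IsCoupling π μ ν),
          ∫⁻ p, ENNReal.ofReal (c p) ∂π := by
  classical
  haveI : SecondCountableTopology M := UniformSpace.secondCountable_of_separable M
  set f : M × M → ℝ≥0∞ := fun p => ENNReal.ofReal (c p) with hf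
  set I : ℝ≥0∞ := ⨅ (π : Measure (M × M)) (_ : IsCoupling π μ ν), ∫⁻ p, f p ∂π with hI
  set T : Set ℝ≥0∞ := {r | ∃ π : Measure (M × M), IsCoupling π μ ν ∧ ∫⁻ p, f p ∂π = r} with hT
  have hprod : IsCoupling (μ.prod ν) μ ν :=
    ⟨inferInstance, by simp [Measure.map_fst_prod], by simp [Measure.map_snd_prod]⟩
  have hTne : T.Nonempty := ⟨_, μ.prod ν, hprod, rfl⟩
  have hIT : I = sInf T := by
    apply le_antisymm
    · refine le_sInf ?_
      rintro r ⟨π₀, hπ₀, hr⟩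
      rw [← hr]
      exact iInf₂_le π₀ hπ₀
    · exact le_iInf fun π₀ => le_iInf fun hπ₀ => sInf_le ⟨π₀, hπ₀, rfl⟩
  obtain ⟨u, hu_anti, hu_tendsto, hu_mem⟩ := exists_seq_tendsto_sInf hTne (OrderBot.bddBelow T)
  choose πseq hcoup hval using hu_mem
  haveI hprobseq : ∀ n, IsProbabilityMeasure (πseq n) := fun n => (hcoup n).1
  -- tightness of the sequence of couplings
  have tight : ∀ ε : ℝ≥0∞, 0 < ε → ∃ K : Set (M × M), IsCompact K ∧ ∀ n, πseq n Kᶜ ≤ ε := by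
    intro ε hε
    have hε2 : (0:ℝ≥0∞) < ε / 2 := ENNReal.div_pos hε.ne' (by simp)
    obtain ⟨K₁, hK₁, hK₁μ⟩ := tight_of_prob μ hε2
    obtain ⟨K₂, hK₂, hK₂ν⟩ := tight_of_prob ν hε2
    refine ⟨K₁ ×ˢ K₂, hK₁.prod hK₂, fun n => ?_⟩
    have hsub : (K₁ ×ˢ K₂)ᶜ ⊆ (Prod.fst ⁻¹' K₁ᶜ) ∪ (Prod.snd ⁻¹' K₂ᶜ) := by
      intro p hp
      by_contra hcon
      simp only [mem_union, mem_preimage, mem_compl_iff, not_or, not_not] at hcon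
      exact hp ⟨hcon.1, hcon.2⟩
    calc πseq n (K₁ ×ˢ K₂)ᶜ ≤ πseq n ((Prod.fst ⁻¹' K₁ᶜ) ∪ (Prod.snd ⁻¹' K₂ᶜ)) :=
          measure_mono hsub
      _ ≤ πseq n (Prod.fst ⁻¹' K₁ᶜ) + πseq n (Prod.snd ⁻¹' K₂ᶜ) := measure_union_le _ _
      _ = μ K₁ᶜ + ν K₂ᶜ := by
          rw [← (hcoup n).2.1, ← (hcoup n).2.2,
            Measure.map_apply measurable_fst hK₁.isClosed.measurableSet.compl,
            Measure.map_apply measurable_snd hK₂.isClosed.measurableSet.compl]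
      _ ≤ ε / 2 + ε / 2 := add_le_add hK₁μ hK₂ν
      _ = ε := ENNReal.add_halves ε
  obtain ⟨π', φ, hφ, hπ'prob, hliminf⟩ := exists_limit_measure πseq (fun n => (hcoup n).1) tight
  haveI := hπ'prob
  -- marginals
  have hfst : π'.map Prod.fst = μ := by
    haveI : IsProbabilityMeasure (π'.map Prod.fst) :=
      Measure.isProbabilityMeasure_map measurable_fst.aemeasurable
    apply measure_eq_of_le_open
    intro G hG
    rw [Measure.map_apply measurable_fst hG.measurableSet]
    refine (hliminf _ (hG.preimage continuous_fst)).trans ?_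
    have heq : (fun n => πseq (φ n) (Prod.fst ⁻¹' G)) = fun _ => μ G := by
      funext n
      rw [← (hcoup (φ n)).2.1, Measure.map_apply measurable_fst hG.measurableSet]
    rw [heq, liminf_const]
  have hsnd : π'.map Prod.snd = ν := by
    haveI : IsProbabilityMeasure (π'.map Prod.snd) :=
      Measure.isProbabilityMeasure_map measurable_snd.aemeasurable
    apply measure_eq_of_le_open
    intro G hG
    rw [Measure.map_apply measurable_snd hG.measurableSet]
    refine (hliminf _ (hG.preimage continuous_snd)).trans ?_
    have heq : (fun n => πseq (φ n) (Prod.snd ⁻¹' G)) = fun _ => ν G := by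
      funext n
      rw [← (hcoup (φ n)).2.2, Measure.map_apply measurable_snd hG.measurableSet]
    rw [heq, liminf_const]
  have hπ'coup : IsCoupling π' μ ν := ⟨hπ'prob, hfst, hsnd⟩
  -- lower semicontinuity bound via the layer cake formula and Fatou
  have hmeas_c : Measurable c := hc.measurable
  have layer : ∀ (ρ : Measure (M × M)),
      ∫⁻ p, f p ∂ρ = ∫⁻ t in Set.Ioi (0:ℝ), ρ {a | t < c a} := fun ρ =>
    lintegral_eq_lintegral_meas_lt ρ (Filter.Eventually.of_forall hc0) hmeas_c.aemeasurable
  have htendI : Tendsto (fun n => ∫⁻ p, f p ∂(πseq (φ n))) atTop (𝓝 I) := by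
    have h1 : Tendsto (fun n => u (φ n)) atTop (𝓝 (sInf T)) :=
      hu_tendsto.comp (hφ.tendsto_atTop)
    rw [hIT]
    refine h1.congr fun n => ?_
    exact (hval (φ n)).symm
  have hbound : ∫⁻ p, f p ∂π' ≤ I := by
    rw [layer π']
    have hopen : ∀ t : ℝ, IsOpen {a : M × M | t < c a} := fun t => hc.isOpen_preimage t
    calc ∫⁻ t in Set.Ioi (0:ℝ), π' {a | t < c a}
        ≤ ∫⁻ t in Set.Ioi (0:ℝ), liminf (fun n => πseq (φ n) {a | t < c a}) atTop :=
          lintegral_mono fun t => hliminf _ (hopen t)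
      _ ≤ liminf (fun n => ∫⁻ t in Set.Ioi (0:ℝ), πseq (φ n) {a | t < c a}) atTop := by
          refine lintegral_liminf_le fun n => ?_
          apply Antitone.measurable
          intro s t hst
          exact measure_mono fun a ha => lt_of_le_of_lt hst ha
      _ = liminf (fun n => ∫⁻ p, f p ∂(πseq (φ n))) atTop := by
          congr 1
          funext n
          rw [← layer]
      _ = I := htendI.liminf_eq
  have hIle : I ≤ ∫⁻ p, f p ∂π' := iInf₂_le π' hπ'coup
  exact ⟨π', hπ'coup, le_antisymm hbound hIle⟩
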